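/- Let G be an abelian group such that the quotient G/2G is finite, and suppose there exists a function h : G → ℝ≥0 with the following properties: (1) for every c > 0, the set {g ∈ G : h(g) < c} is finite; (2) h(2g) = 2·h(g) for all g ∈ G; (3) h(g − g')² + h(g + g')² = 2·h(g)² + 2·h(g')² for all g, g' ∈ G. Then G is finitely generated. -/
import Mathlib


/-- An abstract descent theorem: if `G` is an abelian group with
`G/2G` finite, admitting a nonnegative real-valued "height" function `h` such that
sets of bounded height are finite, `h(2g) = 2h(g)`, and `h` satisfies the
parallelogram equality for squares, then `G` is finitely generated. -/
theorem abstract_descent (G : Type*) [AddCommGroup G]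
    (hquot : Finite (G ⧸ (AddMonoidHom.range
      (AddMonoidHom.mk' (fun g : G => 2 • g) (fun a b => smul_add 2 a b)))))
    (h : G → ℝ) (hnonneg : ∀ g, 0 ≤ h g)
    (hfin : ∀ c : ℝ, 0 < c → {g : G | h g < c}.Finite)
    (hdbl : ∀ g : G, h (2 • g) = 2 * h g)
    (hpar : ∀ g g' : G, h (g - g') ^ 2 + h (g + g') ^ 2 = 2 * h g ^ 2 + 2 * h g' ^ 2) :
    AddGroup.FG G := by
  classical
  set N := AddMonoidHom.range
      (AddMonoidHom.mk' (fun g : G => 2 • g) (fun a b => smul_add 2 a b)) with hNdef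
  have : Fintype (G ⧸ N) := Fintype.ofFinite _
  set r : G ⧸ N → G := Quotient.out with hr
  have hrq : ∀ q : G ⧸ N, (QuotientAddGroup.mk (r q) : G ⧸ N) = q := fun q => Quotient.out_eq q
  have hne : (Finset.univ : Finset (G ⧸ N)).Nonempty := ⟨0, Finset.mem_univ 0⟩
  set C : ℝ := Finset.univ.sup' hne (fun q => h (r q)) with hC
  have hCle : ∀ q : G ⧸ N, h (r q) ≤ C := fun q =>
    Finset.le_sup' (fun q => h (r q)) (Finset.mem_univ q)
  have hC0 : 0 ≤ C := le_trans (hnonneg (r 0)) (hCle 0)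
  set B : ℝ := C ^ 2 + 1 with hB
  have hB1 : 1 ≤ B := by nlinarith
  set S : Set G := Set.range r with hS
  set T : Set G := {g : G | h g ^ 2 ≤ B} with hT
  -- descent step
  have step : ∀ g : G, ∃ x : G, g = 2 • x + r (QuotientAddGroup.mk g) ∧
      h x ^ 2 ≤ (h g ^ 2 + C ^ 2) / 2 := by
    intro g
    set s := r (QuotientAddGroup.mk g) with hs
    have hmk : (QuotientAddGroup.mk g : G ⧸ N) = QuotientAddGroup.mk s := by
      rw [hs, hrq]
    have hmem : g - s ∈ N := by
      rw [← QuotientAddGroup.eq_iff_sub_mem]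
      exact hmk
    obtain ⟨x, hx⟩ := hmem
    simp only [AddMonoidHom.mk'_apply] at hx
    refine ⟨x, ?_, ?_⟩
    · rw [hx]; abel
    · have h1 := hpar g s
      have h2 : h (g - s) = 2 * h x := by rw [← hx, hdbl]
      have h3 : h s ≤ C := hCle _
      have h4 : 0 ≤ h s := hnonneg s
      have h5 : 0 ≤ h (g + s) ^ 2 := sq_nonneg _
      have h6 : h (g - s) ^ 2 = 4 * h x ^ 2 := by rw [h2]; ring
      have h7 : h s ^ 2 ≤ C ^ 2 := by nlinarith
      linarith
  -- main induction
  have main : ∀ n : ℕ, ∀ g : G, h g ^ 2 ≤ B + n →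
      g ∈ AddSubgroup.closure (S ∪ T) := by
    intro n
    induction n with
    | zero =>
      intro g hg
      apply AddSubgroup.subset_closure
      right
      simpa [hT] using hg
    | succ n IH =>
      intro g hg
      by_cases hcase : h g ^ 2 ≤ B + n
      · exact IH g hcase
      · obtain ⟨x, hxeq, hxle⟩ := step g
        have hx' : h x ^ 2 ≤ B + n := by
          push_cast at hg hxle ⊢
          nlinarith
        have hxmem : x ∈ AddSubgroup.closure (S ∪ T) := IH x hx'
        have hsmem : r (QuotientAddGroup.mk g) ∈ AddSubgroup.closure (S ∪ T) :=
          AddSubgroup.subset_closure (Or.inl ⟨_, rfl⟩)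
        rw [hxeq]
        exact AddSubgroup.add_mem _ (AddSubgroup.nsmul_mem _ hxmem 2) hsmem
  refine AddGroup.fg_iff.mpr ⟨S ∪ T, ?_, ?_⟩
  · rw [eq_top_iff]
    intro g _
    have := main ⌈h g ^ 2⌉₊ g (by
      have := Nat.le_ceil (h g ^ 2)
      linarith)
    exact this
  · refine Set.Finite.union (Set.finite_range r) ?_
    apply Set.Finite.subset (hfin (B + 1) (by linarith))
    intro g hg
    simp only [hT, Set.mem_setOf_eq] at hg ⊢
    nlinarith [hnonneg g]
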